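/- arXiv:0903.4394 — 2 statements merged into one kernel-verified Lean document; each statement's English description precedes it below -/
import Mathlib

section
/- Let T : [0,∞) → [0,∞) be a non-decreasing continuous function, let δ ∈ (0,1), and let s ∈ (0,∞). If T is of finite order, i.e. limsup_{r→∞} log T(r)/log r < ∞, then T(r+s) = T(r) + o(T(r)/r^δ) as r runs to infinity outside a set of finite logarithmic measure. -/
open Filter MeasureTheory Topology

noncomputable section

/-- The Nevanlinna proximity function `m(r, f)` of a function `f : ℂ → ℂ`. -/
def nevProx (f : ℂ → ℂ) (r : ℝ) : ℝ :=
  (2 * Real.pi)⁻¹ * ∫ θ in (0:ℝ)..(2 * Real.pi),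
      Real.log (max 1 (‖f ((r : ℂ) * Complex.exp ((θ : ℂ) * Complex.I))‖))

open Classical in
/-- The multiplicity of the pole of `f` at `z` (`0` if `f` does not have a pole there). -/
def poleOrder (f : ℂ → ℂ) (z : ℂ) : ℕ :=
  if h : MeromorphicAt f z then (-((meromorphicOrderAt f z).untopD 0)).toNat else 0

/-- The unintegrated counting function: the number of poles of `f` of modulus at most `t`,
counted with multiplicity. -/
def poleCount (f : ℂ → ℂ) (t : ℝ) : ℝ :=
  ∑' z : ℂ, if ‖z‖ ≤ t then (poleOrder f z : ℝ) else 0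

/-- The integrated Nevanlinna counting function `N(r, f)`. -/
def nevCount (f : ℂ → ℂ) (r : ℝ) : ℝ :=
  (∫ t in (0:ℝ)..r, (poleCount f t - poleCount f 0) / t) + poleCount f 0 * Real.log r

/-- The Nevanlinna characteristic function `T(r, f) = m(r, f) + N(r, f)`. -/
def nevChar (f : ℂ → ℂ) (r : ℝ) : ℝ := nevProx f r + nevCount f r

/-- The order of growth `ρ(f) = limsup_{r → ∞} log T(r, f) / log r` (as an extended real). -/
def growthOrder (f : ℂ → ℂ) : EReal :=
  Filter.limsup (fun r : ℝ => ((Real.log (nevChar f r) / Real.log r : ℝ) : EReal))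
    Filter.atTop

/-- `f` has finite order of growth. -/
def FiniteOrder (f : ℂ → ℂ) : Prop := growthOrder f < ⊤

/-- A set `E ⊆ ℝ` has finite logarithmic measure: `∫_{E ∩ [1, ∞)} dt/t < ∞`. -/
def FiniteLogMeasure (E : Set ℝ) : Prop :=
  ∫⁻ t in E ∩ Set.Ici 1, ENNReal.ofReal t⁻¹ < ⊤

/-- `u(r) = o(v(r))` as `r → ∞` outside a set of finite logarithmic measure. -/
def SmallOOut (u v : ℝ → ℝ) : Prop :=
  ∃ E : Set ℝ, FiniteLogMeasure E ∧
    ∀ ε : ℝ, 0 < ε → ∀ᶠ r in Filter.atTop, r ∉ E → |u r| ≤ ε * v r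

/-- `a` is a small function with respect to `w`: `T(r, a) = S(r, w)`. -/
def SmallFn (a w : ℂ → ℂ) : Prop := SmallOOut (nevChar a) (nevChar w)

/-- `f` is not identically zero as a meromorphic function (it is nonzero away from any
countable exceptional set). -/
def NotIdZero (f : ℂ → ℂ) : Prop := ¬ ({z : ℂ | f z ≠ 0}.Countable)

/-- `f` is not constant as a meromorphic function. -/
def NonConstant (f : ℂ → ℂ) : Prop := ¬ ∃ cst : ℂ, {z : ℂ | f z ≠ cst}.Countable

/-- `f` is a rational function: a quotient of two polynomials (up to junk values at the
finitely many poles). -/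
def IsRationalFn (f : ℂ → ℂ) : Prop :=
  ∃ p q : Polynomial ℂ, q ≠ 0 ∧ {z : ℂ | f z * q.eval z ≠ p.eval z}.Finite

/-- `f` coincides with a rational function as a meromorphic function (i.e. away from a
countable exceptional set). -/
def IsRationalMero (f : ℂ → ℂ) : Prop :=
  ∃ p q : Polynomial ℂ, q ≠ 0 ∧ {z : ℂ | f z * q.eval z ≠ p.eval z}.Countable

/-- `f` has a pole at `z₀`. -/
def IsPole (f : ℂ → ℂ) (z₀ : ℂ) : Prop :=
  Filter.Tendsto (fun z => ‖f z‖) (nhdsWithin z₀ {z₀}ᶜ) Filter.atTop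

/-- `f` has a pole of multiplicity `k` at `z₀`: its Laurent expansion at `z₀` begins at
order `-k`. -/
def PoleOfOrder (f : ℂ → ℂ) (k : ℕ) (z₀ : ℂ) : Prop :=
  ∃ g : ℂ → ℂ, AnalyticAt ℂ g z₀ ∧ g z₀ ≠ 0 ∧
    ∀ᶠ z in nhdsWithin z₀ {z₀}ᶜ, f z = g z / (z - z₀) ^ k

/-- `f` has a zero of multiplicity `k` at `z₀`: its Laurent expansion at `z₀` begins at
order `k`. -/
def ZeroOfOrder (f : ℂ → ℂ) (k : ℕ) (z₀ : ℂ) : Prop :=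
  ∃ g : ℂ → ℂ, AnalyticAt ℂ g z₀ ∧ g z₀ ≠ 0 ∧
    ∀ᶠ z in nhdsWithin z₀ {z₀}ᶜ, f z = (z - z₀) ^ k * g z

/-- `w` is a meromorphic function on `ℂ` whose representative `ℂ → ℂ` is honest: it is
analytic away from its poles (no junk values). -/
def NormalizedMero (w : ℂ → ℂ) : Prop :=
  MeromorphicOn w Set.univ ∧ ∀ z : ℂ, ¬ IsPole w z → AnalyticAt ℂ w z

/-- The data of a difference polynomial in `w(z), w(z + c 0), …, w(z + c (n-1))`:
the shifts `c`, a finite set `I` of multi-indexes, and the coefficient functions `a`. -/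
structure DiffPoly (n : ℕ) where
  c : Fin n → ℂ
  I : Finset (Fin (n + 1) → ℕ)
  a : (Fin (n + 1) → ℕ) → ℂ → ℂ

namespace DiffPoly

variable {n : ℕ}

/-- The shifts, including the trivial shift `0` as the `0`-th one. -/
def shift (P : DiffPoly n) : Fin (n + 1) → ℂ := Fin.cases 0 P.c

/-- The value `P(z, w) = ∑_{λ ∈ I} a_λ(z) w(z)^{λ 0} w(z + c 0)^{λ 1} ⋯ w(z + c (n-1))^{λ n}`. -/
def eval (P : DiffPoly n) (w : ℂ → ℂ) (z : ℂ) : ℂ :=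
  ∑ lam ∈ P.I, P.a lam z * ∏ j : Fin (n + 1), w (z + P.shift j) ^ lam j

/-- The total degree `deg_w(P) = max_{λ ∈ I} (λ_0 + ⋯ + λ_n)`. -/
def deg (P : DiffPoly n) : ℕ := P.I.sup fun lam => ∑ j, lam j

/-- `ord_0(P) = min_{λ ∈ I} λ_0`, the order of the zero of `P(z, x_0, …, x_n)` at `x_0 = 0`. -/
def ord0 (P : DiffPoly n) : ℕ := sInf {m : ℕ | ∃ lam ∈ P.I, lam 0 = m}

/-- The weight `κ(P) = max_{λ ∈ I} (λ_1 + ⋯ + λ_n)`. -/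
def weight (P : DiffPoly n) : ℕ := P.I.sup fun lam => ∑ j : Fin n, lam j.succ

/-- `P` is homogeneous: each term has the same nonzero total degree. -/
def Homogeneous (P : DiffPoly n) : Prop :=
  0 < P.deg ∧ ∀ lam ∈ P.I, (∑ j, lam j) = P.deg

end DiffPoly

/-- The value at `x` of the polynomial in one variable whose coefficients are the functions
`h 0, …, h d` evaluated at `z`. -/
def polyEval (h : ℕ → ℂ → ℂ) (d : ℕ) (z x : ℂ) : ℂ :=
  ∑ k ∈ Finset.range (d + 1), h k z * x ^ k

/-- `H` and `Q`, as polynomials in one variable over the field of meromorphic functions,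
have no common factors: away from a countable set of points `z` the complex polynomials
`H(z, ·)` and `Q(z, ·)` have no common root. -/
def NoCommonFactors (h : ℕ → ℂ → ℂ) (dH : ℕ) (q : ℕ → ℂ → ℂ) (dQ : ℕ) : Prop :=
  {z : ℂ | ∃ x : ℂ, polyEval h dH z x = 0 ∧ polyEval q dQ z x = 0}.Countable

end

set_option maxHeartbeats 1000000 in
/-- Lemma 3.2: if `T : [0,∞) → [0,∞)` is non-decreasing, continuous and
of finite order, then `T(r+s) = T(r) + o(T(r)/r^δ)` outside a set of finite logarithmic
measure. -/
theorem nondecreasing_finite_order_shift (T : ℝ → ℝ)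
    (hmono : MonotoneOn T (Set.Ici 0)) (hcont : ContinuousOn T (Set.Ici 0))
    (hnonneg : ∀ r ∈ Set.Ici (0 : ℝ), 0 ≤ T r)
    (δ : ℝ) (hδ0 : 0 < δ) (hδ1 : δ < 1) (s : ℝ) (hs : 0 < s)
    (hord : Filter.limsup
      (fun r : ℝ => ((Real.log (T r) / Real.log r : ℝ) : EReal)) Filter.atTop < ⊤) :
    ∃ E : Set ℝ, FiniteLogMeasure E ∧
      Filter.Tendsto (fun r => (T (r + s) - T r) * r ^ δ / T r)
        (Filter.atTop ⊓ Filter.principal Eᶜ) (nhds 0) := by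

  classical
  by_cases hpos : ∃ r, 0 ≤ r ∧ 0 < T r
  swap
  · -- T vanishes identically on [0, ∞)
    push_neg at hpos
    refine ⟨∅, ?_, ?_⟩
    · show (∫⁻ t in (∅ : Set ℝ) ∩ Set.Ici 1, ENNReal.ofReal t⁻¹) < ⊤
      rw [Set.empty_inter]
      simp
    · have h0 : ∀ᶠ r in Filter.atTop ⊓ Filter.principal ((∅ : Set ℝ)ᶜ),
          (T (r + s) - T r) * r ^ δ / T r = 0 := by
        filter_upwards [(eventually_ge_atTop (0:ℝ)).filter_mono inf_le_left] with r hr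
        have h1 : T r = 0 := le_antisymm (hpos r hr) (hnonneg r hr)
        have h2 : T (r + s) = 0 :=
          le_antisymm (hpos _ (by linarith)) (hnonneg _ (Set.mem_Ici.mpr (by linarith)))
        rw [h1, h2]; ring
      exact Filter.Tendsto.congr' (h0.mono fun r h => h.symm) tendsto_const_nhds
  obtain ⟨r0, hr0, hTr0⟩ := hpos
  -- extract a polynomial order bound
  obtain ⟨m, hm1, hm2⟩ := exists_between hord
  have hmne_top : m ≠ ⊤ := hm2.ne
  have hmne_bot : m ≠ ⊥ := by
    rintro rfl
    exact absurd hm1 (by simp)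
  set M : ℝ := max m.toReal 1 with hMdef
  have hM1 : (1:ℝ) ≤ M := le_max_right _ _
  have hev : ∀ᶠ r in Filter.atTop, Real.log (T r) / Real.log r < M := by
    filter_upwards [Filter.eventually_lt_of_limsup_lt hm1] with r hr
    have h2 : ((Real.log (T r) / Real.log r : ℝ) : EReal) < ((m.toReal : ℝ) : EReal) := by
      rwa [EReal.coe_toReal hmne_top hmne_bot]
    exact lt_of_lt_of_le (EReal.coe_lt_coe_iff.mp h2) (le_max_left _ _)
  obtain ⟨R0, hR0⟩ := Filter.eventually_atTop.mp hev
  set δ' : ℝ := (1 + δ) / 2 with hδ'def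
  have hδ'pos : 0 < δ' := by simp only [hδ'def]; linarith
  have hδδ' : δ < δ' := by simp only [hδ'def]; linarith
  have hδ'1 : δ' < 1 := by simp only [hδ'def]; linarith
  set A : ℝ := max (max r0 R0) (max s 2) with hAdef
  have hA2 : (2:ℝ) ≤ A := le_trans (le_max_right s 2) (le_max_right _ _)
  have hA1 : (1:ℝ) ≤ A := by linarith
  have hA0 : (0:ℝ) < A := by linarith
  have hAr0 : r0 ≤ A := le_trans (le_max_left r0 R0) (le_max_left _ _)
  have hAR0 : R0 ≤ A := le_trans (le_max_right r0 R0) (le_max_left _ _)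
  have hAs : s ≤ A := le_trans (le_max_left s 2) (le_max_right _ _)
  have hTpos : ∀ r, A ≤ r → 0 < T r := by
    intro r hr
    have h0r : (0:ℝ) ≤ r := by linarith
    exact lt_of_lt_of_le hTr0 (hmono hr0 h0r (by linarith))
  set U : ℝ → ℝ := fun r => Real.log (T r) with hUdef
  have hUmono : MonotoneOn U (Set.Ici A) := by
    intro a ha b hb hab
    exact Real.log_le_log (hTpos a ha)
      (hmono (by simp only [Set.mem_Ici] at ha ⊢; linarith)
        (by simp only [Set.mem_Ici] at hb ⊢; linarith) hab)
  have hUbound : ∀ x, A ≤ x → U x ≤ M * Real.log x := by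
    intro x hx
    have hlx : 0 < Real.log x := Real.log_pos (by linarith)
    have h := hR0 x (le_trans hAR0 hx)
    have h2 : U x / Real.log x ≤ M := h.le
    calc U x = U x / Real.log x * Real.log x := by field_simp
      _ ≤ M * Real.log x := mul_le_mul_of_nonneg_right h2 hlx.le
  set E : Set ℝ :=
    Set.Ici A ∩ (fun r => T (r + s) - (1 + r ^ (-δ')) * T r) ⁻¹' Set.Ici 0 with hEdef
  have hEmem : ∀ r, r ∈ E ↔ A ≤ r ∧ (1 + r ^ (-δ')) * T r ≤ T (r + s) := by
    intro r
    simp only [hEdef, Set.mem_inter_iff, Set.mem_Ici, Set.mem_preimage]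
    constructor
    · rintro ⟨h1, h2⟩; exact ⟨h1, by linarith⟩
    · rintro ⟨h1, h2⟩; exact ⟨h1, by linarith⟩
  have hEclosed : IsClosed E := by
    apply ContinuousOn.preimage_isClosed_of_isClosed ?_ isClosed_Ici isClosed_Ici
    have hT1 : ContinuousOn (fun r : ℝ => T (r + s)) (Set.Ici A) := by
      apply hcont.comp (Continuous.continuousOn (by continuity))
      intro r hr
      simp only [Set.mem_Ici] at hr ⊢
      linarith
    have hT2 : ContinuousOn T (Set.Ici A) :=
      hcont.mono (fun x hx => by simp only [Set.mem_Ici] at hx ⊢; linarith)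
    have hT3 : ContinuousOn (fun r : ℝ => r ^ (-δ')) (Set.Ici A) := by
      apply ContinuousOn.rpow_const continuousOn_id
      intro x hx
      exact Or.inl (ne_of_gt (lt_of_lt_of_le hA0 hx))
    exact hT1.sub (((continuousOn_const.add hT3).mul hT2))
  have hEmeas : MeasurableSet E := hEclosed.measurableSet
  have hEpt : ∀ r ∈ E, Real.log (1 + r ^ (-δ')) ≤ U (r + s) - U r := by
    intro r hr
    obtain ⟨hr1, hr2⟩ := (hEmem r).mp hr
    have hTr : 0 < T r := hTpos r hr1
    have hr0' : 0 < r := lt_of_lt_of_le hA0 hr1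
    have hx : 0 < r ^ (-δ') := Real.rpow_pos_of_pos hr0' _
    have hbase : 0 < 1 + r ^ (-δ') := by linarith
    have h1 : Real.log ((1 + r ^ (-δ')) * T r) ≤ Real.log (T (r + s)) :=
      Real.log_le_log (by positivity) hr2
    rw [Real.log_mul hbase.ne' hTr.ne'] at h1
    simp only [hUdef]
    linarith
  -- constants
  set C1 : ℝ := M * Real.log (4 * A) + M * Real.log 2 + |U A| with hC1def
  have hlog4A : 0 ≤ Real.log (4 * A) := Real.log_nonneg (by linarith)
  have hlog2 : 0 ≤ Real.log 2 := Real.log_nonneg (by norm_num)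
  have hC1nn : 0 ≤ C1 := by
    have := abs_nonneg (U A)
    simp only [hC1def]
    nlinarith
  set q : ℝ := (2:ℝ) ^ (δ' - 1) with hqdef
  have hq0 : 0 ≤ q := (Real.rpow_pos_of_pos (by norm_num) _).le
  have hq1 : q < 1 := Real.rpow_lt_one_of_one_lt_of_neg (by norm_num) (by linarith)
  set C3 : ℝ := 4 * s * C1 with hC3def
  -- interval integrability of U
  have hIintU : ∀ a b : ℝ, A ≤ a → a ≤ b → IntervalIntegrable U volume a b := by
    intro a b ha hab
    apply MonotoneOn.intervalIntegrable
    apply hUmono.mono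
    rw [Set.uIcc_of_le hab]
    exact fun x hx => le_trans ha hx.1
  have hIintU' : ∀ a b : ℝ, A ≤ a → a ≤ b →
      IntervalIntegrable (fun t => U (t + s)) volume a b := by
    intro a b ha hab
    apply MonotoneOn.intervalIntegrable
    rw [Set.uIcc_of_le hab]
    intro x hx y hy hxy
    exact hUmono (by simp only [Set.mem_Ici]; linarith [hx.1])
      (by simp only [Set.mem_Ici]; linarith [hy.1]) (by linarith)
  -- the key integral estimate
  have hKey : ∀ a b : ℝ, A ≤ a → a + s ≤ b →
      (∫ t in a..b, (U (t + s) - U t)) ≤ s * (U (b + s) - U a) := by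
    intro a b ha hab
    have hab' : a ≤ b := by linarith
    have h1 : (∫ t in a..b, (U (t + s) - U t))
        = (∫ t in (a + s)..(b + s), U t) - ∫ t in a..b, U t := by
      rw [intervalIntegral.integral_sub (hIintU' a b ha hab') (hIintU a b ha hab'),
        intervalIntegral.integral_comp_add_right]
    have h2 : (∫ t in (a + s)..(b + s), U t)
        = (∫ t in (a + s)..b, U t) + ∫ t in b..(b + s), U t :=
      (intervalIntegral.integral_add_adjacent_intervals
        (hIintU _ _ (by linarith) (by linarith)) (hIintU _ _ (by linarith) (by linarith))).symm
    have h3 : (∫ t in a..b, U t)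
        = (∫ t in a..(a + s), U t) + ∫ t in (a + s)..b, U t :=
      (intervalIntegral.integral_add_adjacent_intervals
        (hIintU _ _ ha (by linarith)) (hIintU _ _ (by linarith) (by linarith))).symm
    have h4 : (∫ t in b..(b + s), U t) ≤ s * U (b + s) := by
      have h := intervalIntegral.integral_mono_on (by linarith : b ≤ b + s)
        (hIintU b (b + s) (by linarith) (by linarith)) (intervalIntegrable_const (c := U (b + s)))
        (fun x hx => hUmono (by simp only [Set.mem_Ici]; linarith [hx.1])
          (by simp only [Set.mem_Ici]; linarith) hx.2)
      rw [intervalIntegral.integral_const, smul_eq_mul] at h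
      calc (∫ t in b..(b + s), U t) ≤ (b + s - b) * U (b + s) := h
        _ = s * U (b + s) := by ring
    have h5 : s * U a ≤ ∫ t in a..(a + s), U t := by
      have h := intervalIntegral.integral_mono_on (by linarith : a ≤ a + s)
        (intervalIntegrable_const (c := U a)) (hIintU a (a + s) ha (by linarith))
        (fun x hx => hUmono (by simp only [Set.mem_Ici]; linarith)
          (by simp only [Set.mem_Ici]; linarith [hx.1]) hx.1)
      rw [intervalIntegral.integral_const, smul_eq_mul] at h
      calc s * U a = (a + s - a) * U a := by ring
        _ ≤ ∫ t in a..(a + s), U t := h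
    linarith
  -- the block estimate
  have hblock : ∀ k : ℕ, (∫⁻ t in E ∩ Set.Icc (A * 2 ^ k) (A * 2 ^ (k + 1)),
      ENNReal.ofReal t⁻¹) ≤ ENNReal.ofReal (C3 * ((k:ℝ) + 1) * q ^ k) := by
    intro k
    have h2k : (1:ℝ) ≤ 2 ^ k := one_le_pow₀ (by norm_num)
    set R : ℝ := A * 2 ^ k with hRdef
    have hRA : A ≤ R := le_mul_of_one_le_right hA0.le h2k
    have hRpos : 0 < R := lt_of_lt_of_le hA0 hRA
    have h2R : A * 2 ^ (k + 1) = 2 * R := by rw [hRdef]; ring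
    have hIcc : E ∩ Set.Icc (A * 2 ^ k) (A * 2 ^ (k + 1)) = E ∩ Set.Icc R (2 * R) := by
      rw [h2R]
    rw [hIcc]
    set η : ℝ := Real.log (1 + (2 * R) ^ (-δ')) with hηdef
    have h2Rpos : (0:ℝ) < 2 * R := by linarith
    have hx2R : 0 < (2 * R) ^ (-δ') := Real.rpow_pos_of_pos h2Rpos _
    have hx2R1 : (2 * R) ^ (-δ') ≤ 1 :=
      Real.rpow_le_one_of_one_le_of_nonpos (by linarith) (by linarith)
    have hηpos : 0 < η := Real.log_pos (by linarith)
    have hηlb : (2 * R) ^ (-δ') / 2 ≤ η := by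
      have h1x : 0 < 1 + (2 * R) ^ (-δ') := by linarith
      have h := Real.one_sub_inv_le_log_of_pos h1x
      have heq : 1 - (1 + (2 * R) ^ (-δ'))⁻¹
          = (2 * R) ^ (-δ') / (1 + (2 * R) ^ (-δ')) := by field_simp; ring
      have h2 : (2 * R) ^ (-δ') / 2 ≤ (2 * R) ^ (-δ') / (1 + (2 * R) ^ (-δ')) :=
        div_le_div_of_nonneg_left hx2R.le h1x (by linarith)
      rw [hηdef]
      linarith
    have hmeasIcc : MeasurableSet (E ∩ Set.Icc R (2 * R)) :=
      hEmeas.inter measurableSet_Icc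
    -- the main measure estimate
    have hME : ENNReal.ofReal η * volume (E ∩ Set.Icc R (2 * R))
        ≤ ENNReal.ofReal (s * (C1 * ((k:ℝ) + 1))) := by
      have hpt : ∀ r ∈ E ∩ Set.Icc R (2 * R), η ≤ U (r + s) - U r := by
        rintro r ⟨hrE, hrI⟩
        refine le_trans ?_ (hEpt r hrE)
        have hrA : A ≤ r := ((hEmem r).mp hrE).1
        have hr0' : 0 < r := lt_of_lt_of_le hA0 hrA
        apply Real.log_le_log (by linarith)
        have : (2 * R) ^ (-δ') ≤ r ^ (-δ') :=
          Real.rpow_le_rpow_of_nonpos hr0' hrI.2 (by linarith)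
        linarith
      have hint1 : IntegrableOn (fun t => U (t + s)) (Set.Icc R (2 * R)) volume := by
        apply MonotoneOn.integrableOn_isCompact isCompact_Icc
        intro x hx y hy hxy
        exact hUmono (by simp only [Set.mem_Ici]; linarith [hx.1])
          (by simp only [Set.mem_Ici]; linarith [hy.1]) (by linarith)
      have hint2 : IntegrableOn U (Set.Icc R (2 * R)) volume := by
        apply MonotoneOn.integrableOn_isCompact isCompact_Icc
        intro x hx y hy hxy
        exact hUmono (by simp only [Set.mem_Ici]; linarith [hx.1])
          (by simp only [Set.mem_Ici]; linarith [hy.1]) hxy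
      have hint : IntegrableOn (fun r => U (r + s) - U r) (Set.Icc R (2 * R)) volume :=
        hint1.sub hint2
      have hnn : 0 ≤ᵐ[volume.restrict (Set.Icc R (2 * R))] fun r => U (r + s) - U r := by
        rw [Filter.EventuallyLE, ae_restrict_iff' measurableSet_Icc]
        refine Filter.Eventually.of_forall fun r hr => ?_
        have : U r ≤ U (r + s) := hUmono (by simp only [Set.mem_Ici]; linarith [hr.1])
          (by simp only [Set.mem_Ici]; linarith [hr.1]) (by linarith)
        simpa using sub_nonneg.mpr this
      have hfinal : U (2 * R + s) - U R ≤ C1 * ((k:ℝ) + 1) := by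
        have hb1 : U (2 * R + s) ≤ M * Real.log (2 * R + s) :=
          hUbound _ (by linarith)
        have hb2 : Real.log (2 * R + s) ≤ Real.log (4 * A) + (k:ℝ) * Real.log 2 := by
          have hle : 2 * R + s ≤ 4 * A * 2 ^ k := by
            have h4R : 4 * A * 2 ^ k = 4 * R := by rw [hRdef]; ring
            have hsR : s ≤ R := le_trans hAs hRA
            rw [h4R]; linarith
          have h1 : Real.log (2 * R + s) ≤ Real.log (4 * A * 2 ^ k) :=
            Real.log_le_log (by linarith) hle
          rw [Real.log_mul (by linarith) (by positivity), Real.log_pow] at h1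
          exact h1
        have hb3 : U A ≤ U R := hUmono Set.self_mem_Ici (Set.mem_Ici.mpr hRA) hRA
        have hb4 : -|U A| ≤ U A := neg_abs_le _
        have hk0 : (0:ℝ) ≤ (k:ℝ) := Nat.cast_nonneg k
        have hM0 : (0:ℝ) ≤ M := by linarith
        simp only [hC1def]
        nlinarith [mul_le_mul_of_nonneg_left hb2 hM0, mul_nonneg hM0 hlog2,
          mul_nonneg hM0 hlog4A, mul_nonneg hk0 (mul_nonneg hM0 hlog4A),
          mul_nonneg hk0 (abs_nonneg (U A)), abs_nonneg (U A)]
      calc ENNReal.ofReal η * volume (E ∩ Set.Icc R (2 * R))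
          = ∫⁻ _ in E ∩ Set.Icc R (2 * R), ENNReal.ofReal η := (setLIntegral_const _ _).symm
        _ ≤ ∫⁻ r in E ∩ Set.Icc R (2 * R), ENNReal.ofReal (U (r + s) - U r) := by
            apply lintegral_mono_ae
            rw [ae_restrict_iff' hmeasIcc]
            exact Filter.Eventually.of_forall fun r hr => ENNReal.ofReal_le_ofReal (hpt r hr)
        _ ≤ ∫⁻ r in Set.Icc R (2 * R), ENNReal.ofReal (U (r + s) - U r) :=
            lintegral_mono' (Measure.restrict_mono Set.inter_subset_right le_rfl) le_rfl
        _ = ENNReal.ofReal (∫ r in Set.Icc R (2 * R), (U (r + s) - U r)) :=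
            (MeasureTheory.ofReal_integral_eq_lintegral_ofReal hint hnn).symm
        _ = ENNReal.ofReal (∫ r in R..(2 * R), (U (r + s) - U r)) := by
            rw [intervalIntegral.integral_of_le (by linarith : R ≤ 2 * R),
              ← MeasureTheory.integral_Icc_eq_integral_Ioc]
        _ ≤ ENNReal.ofReal (s * (U (2 * R + s) - U R)) :=
            ENNReal.ofReal_le_ofReal (hKey R (2 * R) hRA (by linarith))
        _ ≤ ENNReal.ofReal (s * (C1 * ((k:ℝ) + 1))) :=
            ENNReal.ofReal_le_ofReal (mul_le_mul_of_nonneg_left hfinal hs.le)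
    -- combine
    have step1 : (∫⁻ t in E ∩ Set.Icc R (2 * R), ENNReal.ofReal t⁻¹)
        ≤ ENNReal.ofReal R⁻¹ * volume (E ∩ Set.Icc R (2 * R)) := by
      rw [← setLIntegral_const (E ∩ Set.Icc R (2 * R)) (ENNReal.ofReal R⁻¹)]
      apply lintegral_mono_ae
      rw [ae_restrict_iff' hmeasIcc]
      refine Filter.Eventually.of_forall fun r hr => ENNReal.ofReal_le_ofReal ?_
      exact inv_anti₀ hRpos hr.2.1
    have step2 : volume (E ∩ Set.Icc R (2 * R))
        ≤ ENNReal.ofReal (s * (C1 * ((k:ℝ) + 1)) / η) := by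
      rw [ENNReal.ofReal_div_of_pos hηpos, ENNReal.le_div_iff_mul_le
        (Or.inl (ENNReal.ofReal_pos.mpr hηpos).ne') (Or.inl ENNReal.ofReal_ne_top), mul_comm]
      exact hME
    have hXnn : 0 ≤ s * (C1 * ((k:ℝ) + 1)) := by positivity
    have hreal : R⁻¹ * (s * (C1 * ((k:ℝ) + 1)) / η) ≤ C3 * ((k:ℝ) + 1) * q ^ k := by
      set X := s * (C1 * ((k:ℝ) + 1)) with hXdef
      have hRd' : (0:ℝ) < (2 * R) ^ δ' := Real.rpow_pos_of_pos h2Rpos _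
      have hpowneg : (2 * R) ^ (-δ') = ((2 * R) ^ δ')⁻¹ := Real.rpow_neg h2Rpos.le _
      have hd1 : X / η ≤ X / ((2 * R) ^ (-δ') / 2) :=
        div_le_div_of_nonneg_left hXnn (by positivity) hηlb
      have hd2 : X / ((2 * R) ^ (-δ') / 2) = 2 * X * (2 * R) ^ δ' := by
        rw [hpowneg]; field_simp
      have h2d : (2 * R) ^ δ' ≤ 2 * R ^ δ' := by
        rw [Real.mul_rpow (by norm_num) hRpos.le]
        have : (2:ℝ) ^ δ' ≤ (2:ℝ) ^ (1:ℝ) :=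
          Real.rpow_le_rpow_of_exponent_le (by norm_num) (by linarith)
        rw [Real.rpow_one] at this
        have hRδ : (0:ℝ) ≤ R ^ δ' := (Real.rpow_pos_of_pos hRpos _).le
        nlinarith
      have hRq : R ^ δ' * R⁻¹ ≤ q ^ k := by
        have h1 : R ^ δ' * R⁻¹ = R ^ (δ' - 1) := by
          rw [Real.rpow_sub hRpos, Real.rpow_one, div_eq_mul_inv]
        have h2 : R ^ (δ' - 1) = A ^ (δ' - 1) * ((2:ℝ) ^ k) ^ (δ' - 1) := by
          rw [hRdef, Real.mul_rpow hA0.le (by positivity)]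
        have h3 : A ^ (δ' - 1) ≤ 1 :=
          Real.rpow_le_one_of_one_le_of_nonpos hA1 (by linarith)
        have h4 : ((2:ℝ) ^ k) ^ (δ' - 1) = q ^ k := by
          rw [← Real.rpow_natCast 2 k, ← Real.rpow_mul (by norm_num), mul_comm,
            Real.rpow_mul (by norm_num), Real.rpow_natCast]
        have h5 : (0:ℝ) ≤ ((2:ℝ) ^ k) ^ (δ' - 1) := (Real.rpow_pos_of_pos (by positivity) _).le
        rw [h1, h2, h4]
        exact mul_le_of_le_one_left (pow_nonneg hq0 k) h3
      have hRinv : (0:ℝ) ≤ R⁻¹ := by positivity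
      calc R⁻¹ * (X / η) ≤ R⁻¹ * (2 * X * (2 * R) ^ δ') := by
            rw [← hd2]; exact mul_le_mul_of_nonneg_left hd1 hRinv
        _ ≤ R⁻¹ * (2 * X * (2 * R ^ δ')) := by
            apply mul_le_mul_of_nonneg_left ?_ hRinv
            apply mul_le_mul_of_nonneg_left h2d (by positivity)
        _ = (4 * X) * (R ^ δ' * R⁻¹) := by ring
        _ ≤ (4 * X) * q ^ k := by
            apply mul_le_mul_of_nonneg_left hRq (by linarith)
        _ = C3 * ((k:ℝ) + 1) * q ^ k := by simp only [hXdef, hC3def]; ring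
    calc (∫⁻ t in E ∩ Set.Icc R (2 * R), ENNReal.ofReal t⁻¹)
        ≤ ENNReal.ofReal R⁻¹ * ENNReal.ofReal (s * (C1 * ((k:ℝ) + 1)) / η) :=
          le_trans step1 (mul_le_mul_right step2 _)
      _ = ENNReal.ofReal (R⁻¹ * (s * (C1 * ((k:ℝ) + 1)) / η)) :=
          (ENNReal.ofReal_mul (by positivity)).symm
      _ ≤ ENNReal.ofReal (C3 * ((k:ℝ) + 1) * q ^ k) := ENNReal.ofReal_le_ofReal hreal
  refine ⟨E, ?_, ?_⟩
  · -- finite logarithmic measure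
    show (∫⁻ t in E ∩ Set.Ici 1, ENNReal.ofReal t⁻¹) < ⊤
    have hcover : E ∩ Set.Ici 1 ⊆ ⋃ k : ℕ, E ∩ Set.Icc (A * 2 ^ k) (A * 2 ^ (k + 1)) := by
      rintro r ⟨hrE, _⟩
      have hrA : A ≤ r := ((hEmem r).mp hrE).1
      have hex : ∃ n : ℕ, r ≤ A * 2 ^ (n + 1) := by
        obtain ⟨n, hn⟩ := exists_nat_gt (r / A)
        refine ⟨n, ?_⟩
        have h2 : (n:ℝ) < 2 ^ (n + 1) := by
          exact_mod_cast Nat.lt_of_lt_of_le (Nat.lt_two_pow_self (n := n)) (Nat.pow_le_pow_right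
            (by norm_num) (Nat.le_succ n))
        have h3 : r / A < 2 ^ (n + 1) := lt_trans hn h2
        have := (div_lt_iff₀ hA0).mp h3
        linarith
      refine Set.mem_iUnion.mpr ⟨Nat.find hex, hrE, ?_, Nat.find_spec hex⟩
      rcases Nat.eq_zero_or_pos (Nat.find hex) with h0 | hp
      · rw [h0]; simpa using hrA
      · have hm := Nat.find_min hex (Nat.sub_lt hp one_pos)
        push_neg at hm
        have heq : Nat.find hex - 1 + 1 = Nat.find hex := Nat.succ_pred_eq_of_pos hp
        rw [heq] at hm
        exact hm.le
    have hsummable : Summable (fun k : ℕ => C3 * ((k:ℝ) + 1) * q ^ k) := by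
      have hs1 : Summable (fun n : ℕ => (n:ℝ) * q ^ n) := by
        have := summable_pow_mul_geometric_of_norm_lt_one 1
          (show ‖q‖ < 1 by rwa [Real.norm_eq_abs, abs_of_nonneg hq0])
        simpa using this
      have hs2 : Summable (fun n : ℕ => q ^ n) := summable_geometric_of_lt_one hq0 hq1
      exact ((hs1.add hs2).mul_left C3).congr fun n => by ring
    calc (∫⁻ t in E ∩ Set.Ici 1, ENNReal.ofReal t⁻¹)
        ≤ ∫⁻ t in ⋃ k : ℕ, E ∩ Set.Icc (A * 2 ^ k) (A * 2 ^ (k + 1)), ENNReal.ofReal t⁻¹ :=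
          lintegral_mono' (Measure.restrict_mono hcover le_rfl) le_rfl
      _ ≤ ∑' k : ℕ, ∫⁻ t in E ∩ Set.Icc (A * 2 ^ k) (A * 2 ^ (k + 1)), ENNReal.ofReal t⁻¹ :=
          lintegral_iUnion_le _ _
      _ ≤ ∑' k : ℕ, ENNReal.ofReal (C3 * ((k:ℝ) + 1) * q ^ k) :=
          ENNReal.tsum_le_tsum hblock
      _ = ENNReal.ofReal (∑' k : ℕ, C3 * ((k:ℝ) + 1) * q ^ k) :=
          (ENNReal.ofReal_tsum_of_nonneg (fun n => by positivity) hsummable).symm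
      _ < ⊤ := ENNReal.ofReal_lt_top
  · -- the tendsto part
    have htend : Filter.Tendsto (fun r : ℝ => r ^ (δ - δ')) Filter.atTop (nhds 0) := by
      have h := tendsto_rpow_neg_atTop (y := δ' - δ) (by linarith)
      simpa [neg_sub] using h
    apply tendsto_of_tendsto_of_tendsto_of_le_of_le' (tendsto_const_nhds (x := (0:ℝ)))
      (htend.mono_left inf_le_left)
    · rw [Filter.eventually_inf_principal]
      filter_upwards [eventually_ge_atTop A] with r hrA _
      have hTr := hTpos r hrA
      have hmon : T r ≤ T (r + s) := hmono (by simp only [Set.mem_Ici]; linarith)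
        (by simp only [Set.mem_Ici]; linarith) (by linarith)
      have hr0' : (0:ℝ) < r := lt_of_lt_of_le hA0 hrA
      exact div_nonneg (mul_nonneg (by linarith) (Real.rpow_nonneg hr0'.le δ)) hTr.le
    · rw [Filter.eventually_inf_principal]
      filter_upwards [eventually_ge_atTop A] with r hrA hrE
      have hTr := hTpos r hrA
      have hr0' : (0:ℝ) < r := lt_of_lt_of_le hA0 hrA
      have h2 : T (r + s) < (1 + r ^ (-δ')) * T r := by
        by_contra h
        push_neg at h
        exact hrE ((hEmem r).mpr ⟨hrA, h⟩)
      have hkey : T (r + s) - T r ≤ r ^ (-δ') * T r := by nlinarith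
      have hrδ : (0:ℝ) ≤ r ^ δ := (Real.rpow_pos_of_pos hr0' _).le
      calc (T (r + s) - T r) * r ^ δ / T r
          = (T (r + s) - T r) * r ^ δ * (T r)⁻¹ := by rw [div_eq_mul_inv]
        _ ≤ (r ^ (-δ') * T r) * r ^ δ * (T r)⁻¹ :=
            mul_le_mul_of_nonneg_right (mul_le_mul_of_nonneg_right hkey hrδ)
              (inv_nonneg.mpr hTr.le)
        _ = r ^ (-δ') * r ^ δ := by field_simp
        _ = r ^ (δ - δ') := by
            rw [← Real.rpow_add hr0']; ring_nf
end

section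
/- Let a_0 ≢ 0, a_1, a_2 be rational functions and let w be a meromorphic function on ℂ satisfying the difference equation w(z+1) + w(z−1) = (a_2(z)w(z)^2 + a_1(z)w(z) + a_0(z))/w(z)^2. If w has a zero of multiplicity k_0 ≥ 1 at a point z_0 at which a_0, a_1 and a_2 are analytic and a_0(z_0) ≠ 0, then w has a pole of multiplicity at least 2k_0 at z_0 + 1 or at z_0 − 1. -/
open Filter MeasureTheory Topology

-- aux 1: a countable set is not a punctured neighborhood
lemma aux_not_mem_punctured {s : Set ℂ} (hs : s.Countable) (z₀ : ℂ) :
    ¬ s ∈ 𝓝[≠] z₀ := by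
  intro h
  rw [mem_nhdsWithin] at h
  obtain ⟨U, hU, hzU, hsub⟩ := h
  have hc : (s ∪ {z₀}).Countable := hs.union (Set.countable_singleton z₀)
  obtain ⟨z, hz, hzU'⟩ := (hc.dense_compl ℂ).exists_mem_open hU ⟨z₀, hzU⟩
  have hz2 : z ∉ ({z₀} : Set ℂ) := fun h => hz (Set.mem_union_right _ h)
  exact hz (Set.mem_union_left _ (hsub ⟨hzU', hz2⟩))

-- aux 2: a meromorphic function vanishing off a countable set vanishes near the point
lemma aux_eventually_zero {F : ℂ → ℂ} {z₀ : ℂ} (hF : MeromorphicAt F z₀)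
    (hc : {z : ℂ | F z ≠ 0}.Countable) : ∀ᶠ z in 𝓝[≠] z₀, F z = 0 := by
  obtain ⟨n, hn⟩ := hF
  rcases hn.eventually_eq_zero_or_eventually_ne_zero with h | h
  · have h' := h.filter_mono (nhdsWithin_le_nhds (s := {z₀}ᶜ))
    filter_upwards [h', eventually_mem_nhdsWithin] with z hz hz'
    have : (z - z₀) ^ n ≠ 0 := pow_ne_zero _ (sub_ne_zero.mpr hz')
    simpa [smul_eq_mul, this] using hz
  · exfalso
    apply aux_not_mem_punctured hc z₀
    apply Filter.mem_of_superset h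
    intro z hz
    simp only [Set.mem_setOf_eq] at hz ⊢
    intro h0
    exact hz (by simp [h0])

-- aux 3: translation of meromorphy
lemma aux_mero_comp_add {w : ℂ → ℂ} {y c : ℂ} (h : MeromorphicAt w (y + c)) :
    MeromorphicAt (fun z => w (z + c)) y := by
  obtain ⟨n, hn⟩ := h
  refine ⟨n, ?_⟩
  have h2 : AnalyticAt ℂ (fun z : ℂ => z + c) y := analyticAt_id.add analyticAt_const
  have := hn.comp (x := y) (by simpa using h2)
  simpa [Function.comp_def, add_sub_add_right_eq_sub] using this

-- aux 4: if the order is > -m, then (z-x)^m * f z → 0 on the punctured nbhd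
lemma aux_tendsto_zero {f : ℂ → ℂ} {x : ℂ} (hf : MeromorphicAt f x) (m : ℕ)
    (h : ((-(m : ℤ) : ℤ) : WithTop ℤ) < meromorphicOrderAt f x) :
    Tendsto (fun z => (z - x) ^ m * f z) (𝓝[≠] x) (𝓝 0) := by
  rcases eq_or_ne (meromorphicOrderAt f x) ⊤ with htop | hne
  · have h0 := meromorphicOrderAt_eq_top_iff.mp htop
    have he : (fun z => (z - x) ^ m * f z) =ᶠ[𝓝[≠] x] fun _ => 0 := by
      filter_upwards [h0] with z hz; simp [hz]
    rw [Filter.tendsto_congr' he]; exact tendsto_const_nhds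
  · obtain ⟨n, hn⟩ := WithTop.ne_top_iff_exists.mp hne
    obtain ⟨g, hg_an, hg_ne, hg_eq⟩ := (meromorphicOrderAt_eq_int_iff (n := n) hf).mp hn.symm
    have hmn : 0 < (m : ℤ) + n := by
      have : -(m : ℤ) < n := by rw [← hn] at h; exact_mod_cast h
      omega
    set k : ℕ := ((m : ℤ) + n).toNat with hk
    have hk' : ((m : ℤ) + n) = (k : ℤ) := by omega
    have hk0 : k ≠ 0 := by omega
    have he : (fun z => (z - x) ^ m * f z) =ᶠ[𝓝[≠] x] fun z => (z - x) ^ k * g z := by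
      filter_upwards [hg_eq, eventually_mem_nhdsWithin] with z hz hz'
      have hzx : z - x ≠ 0 := sub_ne_zero.mpr hz'
      rw [hz, smul_eq_mul, ← mul_assoc, ← zpow_natCast (z - x) m,
        ← zpow_add₀ hzx, hk', zpow_natCast]
    rw [Filter.tendsto_congr' he]
    have hcont : Tendsto (fun z => (z - x) ^ k * g z) (𝓝 x) (𝓝 ((x - x) ^ k * g x)) :=
      (((continuousAt_id.sub continuousAt_const).pow k).mul hg_an.continuousAt)
    have : ((x : ℂ) - x) ^ k * g x = 0 := by simp [zero_pow hk0]
    rw [this] at hcont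
    exact hcont.mono_left nhdsWithin_le_nhds

-- aux 5: from small order of the translate to a pole
lemma aux_pole {w : ℂ → ℂ} {z₀ c : ℂ} {k : ℕ}
    (hm : MeromorphicAt (fun z => w (z + c)) z₀)
    (hord : meromorphicOrderAt (fun z => w (z + c)) z₀ ≤ ((-(k : ℤ) : ℤ) : WithTop ℤ)) :
    ∃ m : ℕ, k ≤ m ∧ PoleOfOrder w m (z₀ + c) := by
  have hne : meromorphicOrderAt (fun z => w (z + c)) z₀ ≠ ⊤ := by
    intro hh; rw [hh] at hord; exact absurd hord (by simp)
  obtain ⟨n, hn⟩ := WithTop.ne_top_iff_exists.mp hne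
  have hn' : n ≤ -(k : ℤ) := by rw [← hn] at hord; exact_mod_cast hord
  obtain ⟨g, hg_an, hg_ne, hg_eq⟩ := (meromorphicOrderAt_eq_int_iff (n := n) hm).mp hn.symm
  refine ⟨(-n).toNat, by omega, ?_⟩
  set m : ℕ := (-n).toNat with hmdef
  have hnm : n = -(m : ℤ) := by omega
  have hmap : Tendsto (fun ζ : ℂ => ζ - c) (𝓝[≠] (z₀ + c)) (𝓝[≠] z₀) := by
    rw [tendsto_nhdsWithin_iff]
    constructor
    · exact ((continuous_id.sub continuous_const).tendsto' (z₀ + c) z₀ (by simp)).mono_left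
        nhdsWithin_le_nhds
    · filter_upwards [eventually_mem_nhdsWithin] with ζ hζ
      simp only [Set.mem_compl_iff, Set.mem_singleton_iff] at hζ ⊢
      intro hcon; apply hζ; linear_combination hcon
  refine ⟨fun ζ => g (ζ - c), ?_, by simpa using hg_ne, ?_⟩
  · have h2 : AnalyticAt ℂ (fun ζ : ℂ => ζ - c) (z₀ + c) := analyticAt_id.sub analyticAt_const
    have h3 : AnalyticAt ℂ g ((z₀ + c) - c) := by rw [add_sub_cancel_right]; exact hg_an
    simpa [Function.comp_def] using
      AnalyticAt.comp (g := g) (f := fun ζ : ℂ => ζ - c) (x := z₀ + c) h3 h2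
  · have := hmap.eventually hg_eq
    filter_upwards [this, eventually_mem_nhdsWithin] with ζ hζ hζ'
    have h1 : ζ - c + c = ζ := by ring
    have h2 : ζ - c - z₀ = ζ - (z₀ + c) := by ring
    rw [h1, h2] at hζ
    have hzx : ζ - (z₀ + c) ≠ 0 := sub_ne_zero.mpr hζ'
    rw [hζ, hnm, smul_eq_mul, zpow_neg, zpow_natCast]
    field_simp

/-- if a meromorphic solution of
`w(z+1) + w(z-1) = (a₂w² + a₁w + a₀)/w²` has a zero of multiplicity `k₀` at `z₀`, where the
coefficients are analytic and `a₀(z₀) ≠ 0`, then `w` has a pole of multiplicity at least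
`2k₀` at `z₀ + 1` or at `z₀ - 1`. -/
theorem dP1_zero_forces_pole (a0 a1 a2 : ℂ → ℂ)
    (ha0 : IsRationalFn a0) (ha1 : IsRationalFn a1) (ha2 : IsRationalFn a2)
    (ha0nz : NotIdZero a0)
    (w : ℂ → ℂ) (hw : NormalizedMero w)
    (heq : {z : ℂ | (w (z + 1) + w (z - 1)) * w z ^ 2 ≠
      a2 z * w z ^ 2 + a1 z * w z + a0 z}.Countable)
    (z₀ : ℂ) (k₀ : ℕ) (hk₀ : 1 ≤ k₀) (hzero : ZeroOfOrder w k₀ z₀)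
    (ha0an : AnalyticAt ℂ a0 z₀) (ha1an : AnalyticAt ℂ a1 z₀) (ha2an : AnalyticAt ℂ a2 z₀)
    (ha0z₀ : a0 z₀ ≠ 0) :
    (∃ m : ℕ, 2 * k₀ ≤ m ∧ PoleOfOrder w m (z₀ + 1)) ∨
      (∃ m : ℕ, 2 * k₀ ≤ m ∧ PoleOfOrder w m (z₀ - 1)) := by
  obtain ⟨g, hg_an, hg_ne, hg_eq⟩ := hzero
  have hk0 : k₀ ≠ 0 := by omega
  have hwt : Tendsto w (𝓝[≠] z₀) (𝓝 0) := by
    have h1 : Tendsto (fun z => (z - z₀) ^ k₀ * g z) (𝓝 z₀) (𝓝 ((z₀ - z₀) ^ k₀ * g z₀)) :=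
      ((continuousAt_id.sub continuousAt_const).pow k₀).mul hg_an.continuousAt
    have h2 : ((z₀ : ℂ) - z₀) ^ k₀ * g z₀ = 0 := by simp [zero_pow hk0]
    rw [h2] at h1
    exact (Filter.tendsto_congr' hg_eq).mpr (h1.mono_left nhdsWithin_le_nhds)
  have hnotpole : ¬ (Tendsto (fun z' => ‖w z'‖) (𝓝[≠] z₀) atTop) := by
    intro hp
    have habs : Tendsto (fun z => ‖w z‖) (𝓝[≠] z₀) (𝓝 0) := by
      have := (continuous_norm.tendsto (0:ℂ)).comp hwt
      simpa [Function.comp_def] using this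
    exact not_tendsto_atTop_of_tendsto_nhds habs hp
  have hw_an : AnalyticAt ℂ w z₀ := hw.2 z₀ hnotpole
  have hwz₀ : w z₀ = 0 := tendsto_nhds_unique hw_an.continuousAt.continuousWithinAt hwt
  have mw : MeromorphicAt w z₀ := hw_an.meromorphicAt
  have m1 : MeromorphicAt (fun z => w (z + 1)) z₀ :=
    aux_mero_comp_add (hw.1 (z₀ + 1) (Set.mem_univ _))
  have m2' : MeromorphicAt (fun z => w (z + (-1))) z₀ :=
    aux_mero_comp_add (hw.1 (z₀ + (-1)) (Set.mem_univ _))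
  have m2 : MeromorphicAt (fun z => w (z - 1)) z₀ := by
    simpa [← sub_eq_add_neg] using m2'
  set F : ℂ → ℂ := fun z => (w (z + 1) + w (z - 1)) * w z ^ 2 -
      (a2 z * w z ^ 2 + a1 z * w z + a0 z) with hFdef
  have mF : MeromorphicAt F z₀ := by
    apply MeromorphicAt.sub
    · exact (m1.add m2).mul (mw.pow 2)
    · exact ((ha2an.meromorphicAt.mul (mw.pow 2)).add (ha1an.meromorphicAt.mul mw)).add
        ha0an.meromorphicAt
  have hsub : {z : ℂ | F z ≠ 0} ⊆ {z : ℂ | (w (z + 1) + w (z - 1)) * w z ^ 2 ≠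
      a2 z * w z ^ 2 + a1 z * w z + a0 z} := fun z hz => sub_ne_zero.mp hz
  have hcF : {z : ℂ | F z ≠ 0}.Countable := heq.mono hsub
  have hF0 : ∀ᶠ z in 𝓝[≠] z₀, F z = 0 := aux_eventually_zero mF hcF
  set G : ℂ → ℂ := fun z => (a2 z * w z ^ 2 + a1 z * w z + a0 z) / g z ^ 2 with hGdef
  have hG_an : AnalyticAt ℂ G z₀ :=
    AnalyticAt.div (((ha2an.mul (hw_an.pow 2)).add (ha1an.mul hw_an)).add ha0an)
      (hg_an.pow 2) (pow_ne_zero 2 hg_ne)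
  have hGz₀ : G z₀ ≠ 0 := by
    have hG : G z₀ = a0 z₀ / g z₀ ^ 2 := by simp [hGdef, hwz₀]
    rw [hG]; exact div_ne_zero ha0z₀ (pow_ne_zero 2 hg_ne)
  have hgne_ev : ∀ᶠ z in 𝓝[≠] z₀, g z ≠ 0 :=
    (hg_an.continuousAt.eventually_ne hg_ne).filter_mono nhdsWithin_le_nhds
  have key : ∀ᶠ z in 𝓝[≠] z₀, w (z + 1) + w (z - 1) = G z / (z - z₀) ^ (2 * k₀) := by
    filter_upwards [hF0, hg_eq, hgne_ev, eventually_mem_nhdsWithin] with z hFz hwz hgz hz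
    have hz' : z - z₀ ≠ 0 := sub_ne_zero.mpr hz
    have hwne : w z ≠ 0 := by rw [hwz]; exact mul_ne_zero (pow_ne_zero _ hz') hgz
    have hFz' : (w (z + 1) + w (z - 1)) * w z ^ 2 = a2 z * w z ^ 2 + a1 z * w z + a0 z :=
      sub_eq_zero.mp hFz
    have hstep : w (z + 1) + w (z - 1) = (a2 z * w z ^ 2 + a1 z * w z + a0 z) / w z ^ 2 := by
      rw [eq_div_iff (pow_ne_zero 2 hwne)]; exact hFz'
    rw [hstep, hGdef]
    rw [hwz]
    field_simp
    rw [hwz]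
    ring
  have key' : ∀ᶠ z in 𝓝[≠] z₀, w (z + 1) + w (z + (-1)) = G z / (z - z₀) ^ (2 * k₀) := by
    simpa [← sub_eq_add_neg] using key
  have hdich : meromorphicOrderAt (fun z => w (z + 1)) z₀ ≤ ((-((2 * k₀ : ℕ) : ℤ) : ℤ) : WithTop ℤ) ∨
      meromorphicOrderAt (fun z => w (z + (-1))) z₀ ≤ ((-((2 * k₀ : ℕ) : ℤ) : ℤ) : WithTop ℤ) := by
    by_contra hcon
    push_neg at hcon
    obtain ⟨h1, h2⟩ := hcon
    have t1 := aux_tendsto_zero m1 (2 * k₀) h1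
    have t2 := aux_tendsto_zero m2' (2 * k₀) h2
    have tsum := t1.add t2
    rw [add_zero] at tsum
    have tsum' : Tendsto (fun z => (z - z₀) ^ (2 * k₀) * (w (z + 1) + w (z + (-1))))
        (𝓝[≠] z₀) (𝓝 0) := Tendsto.congr (fun z => by ring) tsum
    have tG : Tendsto G (𝓝[≠] z₀) (𝓝 0) := by
      refine tsum'.congr' ?_
      filter_upwards [key', eventually_mem_nhdsWithin] with z hkey hz
      rw [hkey]
      have hz' : (z - z₀) ^ (2 * k₀) ≠ 0 := pow_ne_zero _ (sub_ne_zero.mpr hz)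
      field_simp
    have tG' : Tendsto G (𝓝[≠] z₀) (𝓝 (G z₀)) := hG_an.continuousAt.continuousWithinAt
    exact hGz₀ (tendsto_nhds_unique tG' tG)
  rcases hdich with h | h
  · exact Or.inl (aux_pole m1 h)
  · right
    have := aux_pole m2' h
    simpa [← sub_eq_add_neg] using this
end
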